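/- Let X ⊆ A^ℤ be a subshift, u ∈ L(X), and W a finite set of words such that uWu ⊆ L(X) and each pair of (not necessarily distinct) elements of uWu has only u as an overlap besides the trivial overlaps. Let π: uWu → uWu be a permutation preserving word length and syntactic class. Then there is a reversible cellular automaton F: X → X such that for every x ∈ X, F(x) is obtained from x by replacing every occurrence of each w ∈ uWu by π(w); moreover elements of uWu occur in F(x) at exactly the same positions as in x. -/

import Mathlib

/-- The shift map on bi-infinite sequences. -/
def shiftMap {A : Type*} (x : ℤ → A) : ℤ → A := fun i => x (i + 1)

/-- The `k`-fold shift map (`σ^k`). -/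
def shiftPow {A : Type*} (k : ℤ) (x : ℤ → A) : ℤ → A := fun i => x (i + k)

/-- A subshift: a closed shift-invariant subset of `A^ℤ`. -/
def IsSubshift {A : Type*} [TopologicalSpace A] (X : Set (ℤ → A)) : Prop :=
  IsClosed X ∧ shiftMap '' X = X

/-- The word `w` occurs in `x` at position `i`. -/
def occursAt {A : Type*} (x : ℤ → A) (w : List A) (i : ℤ) : Prop :=
  ∀ (k : ℕ) (hk : k < w.length), x (i + k) = w.get ⟨k, hk⟩

/-- `w` belongs to the language of `X`. -/
def InLang {A : Type*} (X : Set (ℤ → A)) (w : List A) : Prop :=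
  ∃ x ∈ X, occursAt x w 0

/-- The set of contexts of a word with respect to `X`. -/
def contexts {A : Type*} (X : Set (ℤ → A)) (w : List A) : Set (List A × List A) :=
  {p | InLang X (p.1 ++ w ++ p.2)}

/-- `w` is a synchronizing word of `X`. -/
def IsSynchronizing {A : Type*} (X : Set (ℤ → A)) (w : List A) : Prop :=
  InLang X w ∧ ∀ u v : List A, InLang X (u ++ w) → InLang X (w ++ v) → InLang X (u ++ w ++ v)

/-- `X` is a transitive subshift. -/
def IsTransitiveSubshift {A : Type*} (X : Set (ℤ → A)) : Prop :=
  ∀ u v : List A, InLang X u → InLang X v → ∃ w : List A, InLang X (u ++ w ++ v)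

/-- A reversible cellular automaton (automorphism) of the subshift `X`. -/
def IsAutomorphism {A : Type*} [TopologicalSpace A] (X : Set (ℤ → A))
    (F : (ℤ → A) → (ℤ → A)) : Prop :=
  Set.MapsTo F X X ∧ ContinuousOn F X ∧ (∀ x ∈ X, F (shiftMap x) = shiftMap (F x)) ∧
  ∃ G : (ℤ → A) → (ℤ → A), Set.MapsTo G X X ∧ ContinuousOn G X ∧
    (∀ x ∈ X, G (shiftMap x) = shiftMap (G x)) ∧
    (∀ x ∈ X, G (F x) = x) ∧ (∀ x ∈ X, F (G x) = x)

/-- `F` is given on `X` by a local rule of radius `r`. -/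
def HasRadius {A : Type*} (X : Set (ℤ → A)) (F : (ℤ → A) → (ℤ → A)) (r : ℕ) : Prop :=
  ∃ f : (Fin (2 * r + 1) → A) → A, ∀ x ∈ X, ∀ i : ℤ, F x i = f (fun k => x (i - r + k))

/-- `x` is an equicontinuity point of `(X, F)` (combinatorial formulation). -/
def IsEquicontinuityPoint {A : Type*} (X : Set (ℤ → A)) (F : (ℤ → A) → (ℤ → A))
    (x : ℤ → A) : Prop :=
  x ∈ X ∧ ∀ N : ℕ, ∃ M : ℕ, ∀ y ∈ X, (∀ j : ℤ, |j| ≤ (M : ℤ) → y j = x j) →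
    ∀ t : ℕ, ∀ j : ℤ, |j| ≤ (N : ℤ) → F^[t] y j = F^[t] x j

/-- `w` is an overlap of `u` and `v`. -/
def IsOverlap {A : Type*} (u v w : List A) : Prop :=
  (w <:+ u ∧ w <+: v) ∨ (w = u ∧ u <:+: v) ∨ (w = v ∧ v <:+: u)

/-- `w` is a trivial overlap of `u` and `v`. -/
def IsTrivialOverlap {A : Type*} (u v w : List A) : Prop :=
  w = [] ∨ (w = u ∧ w = v)


namespace Stmt3Aux

variable {A : Type*}

lemma occursAt_iff (x : ℤ → A) (v : List A) (i : ℤ) :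
    occursAt x v i ↔ ∀ (k : ℕ) (hk : k < v.length), x (i + k) = v[k] := Iff.rfl

lemma occursAt_getElem {x : ℤ → A} {v : List A} {i : ℤ} (h : occursAt x v i) (k : ℕ)
    (hk : k < v.length) : x (i + k) = v[k]'hk := h k hk

lemma occursAt_shift (x : ℤ → A) (v : List A) (i : ℤ) :
    occursAt (shiftMap x) v i ↔ occursAt x v (i + 1) := by
  constructor <;> intro h k hk <;> have := h k hk <;>
    simpa [shiftMap, show i + 1 + (k:ℤ) = i + k + 1 by ring] using this

def window (x : ℤ → A) (a : ℤ) (m : ℕ) : List A := List.ofFn fun k : Fin m => x (a + k)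

@[simp] lemma window_length (x : ℤ → A) (a : ℤ) (m : ℕ) : (window x a m).length = m := by
  simp [window]

lemma window_getElem (x : ℤ → A) (a : ℤ) (m : ℕ) (k : ℕ) (hk : k < m) :
    (window x a m)[k]'(by simpa using hk) = x (a + k) := by
  simp [window]

lemma occursAt_window (x : ℤ → A) (a : ℤ) (m : ℕ) : occursAt x (window x a m) a := by
  intro k hk
  simp only [window_length] at hk
  simp [window_getElem x a m k hk, List.get_eq_getElem]

lemma window_append (x : ℤ → A) (a : ℤ) (m₁ m₂ : ℕ) :
    window x a (m₁ + m₂) = window x a m₁ ++ window x (a + m₁) m₂ := by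
  unfold window
  rw [List.ofFn_add]
  congr 1 <;> (congr 1; funext j; congr 1) <;> simp only [Fin.coe_natAdd, Fin.coe_castAdd] <;> push_cast <;> ring

lemma window_congr {x y : ℤ → A} {a : ℤ} {m : ℕ}
    (h : ∀ k : ℕ, k < m → x (a + k) = y (a + k)) : window x a m = window y a m := by
  unfold window; congr 1; ext k; exact h k k.2

lemma window_infix (y : ℤ → A) (lo a : ℤ) (d m e : ℕ) (h : a = lo + d) :
    window y a m <:+: window y lo (d + (m + e)) := by
  rw [window_append, window_append, ← h]
  exact ⟨window y lo d, window y (a + m) e, by simp [List.append_assoc]⟩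

end Stmt3Aux

section P2
variable {A : Type*} [TopologicalSpace A] {X : Set (ℤ → A)}

lemma mem_of_shiftMap (hX : IsSubshift X) {z : ℤ → A} (hz : z ∈ X) : shiftMap z ∈ X := by
  have : shiftMap z ∈ shiftMap '' X := ⟨z, hz, rfl⟩
  rwa [hX.2] at this

lemma mem_of_shiftInv (hX : IsSubshift X) {z : ℤ → A} (hz : z ∈ X) :
    (fun i => z (i - 1)) ∈ X := by
  rw [← hX.2] at hz
  obtain ⟨z', hz', rfl⟩ := hz
  have : (fun i => shiftMap z' (i - 1)) = z' := by
    funext i; simp [shiftMap]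
  rw [this]; exact hz'

lemma shiftPow_mem (hX : IsSubshift X) (k : ℤ) {x : ℤ → A} (hx : x ∈ X) :
    shiftPow k x ∈ X := by
  induction k using Int.induction_on with
  | zero => have : shiftPow 0 x = x := by funext i; simp [shiftPow]
            rwa [this]
  | succ k ih =>
      have : shiftPow (k + 1) x = shiftMap (shiftPow k x) := by
        funext i; simp [shiftPow, shiftMap]; ring_nf
      rw [this]; exact mem_of_shiftMap hX ih
  | pred k ih =>
      have : shiftPow (-(k : ℤ) - 1) x = (fun i => shiftPow (-(k:ℤ)) x (i - 1)) := by
        funext i; simp [shiftPow]; ring_nf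
      rw [this]; exact mem_of_shiftInv hX ih

lemma inLang_of_occursAt (hX : IsSubshift X) {x : ℤ → A} (hx : x ∈ X) {l : List A} {i : ℤ}
    (h : occursAt x l i) : InLang X l := by
  refine ⟨shiftPow i x, shiftPow_mem hX i hx, fun k hk => ?_⟩
  have h2 := h k hk
  simp only [shiftPow]
  rw [show (0:ℤ) + k + i = i + k by ring]
  exact h2

lemma inLang_window (hX : IsSubshift X) {x : ℤ → A} (hx : x ∈ X) (a : ℤ) (m : ℕ) :
    InLang X (Stmt3Aux.window x a m) :=
  inLang_of_occursAt hX hx (Stmt3Aux.occursAt_window x a m)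

lemma inLang_infix (hX : IsSubshift X) {l l' : List A} (h : InLang X l') (hinf : l <:+: l') :
    InLang X l := by
  obtain ⟨y, hy, hocc⟩ := h
  obtain ⟨s, t, rfl⟩ := hinf
  refine inLang_of_occursAt hX hy (i := (s.length : ℤ)) (fun k hk => ?_)
  have hlt : s.length + k < (s ++ l ++ t).length := by simp; omega
  have h2 := hocc (s.length + k) hlt
  simp only [List.get_eq_getElem] at h2 ⊢
  have e0 : (0:ℤ) + ((s.length + k : ℕ) : ℤ) = (s.length:ℤ) + k := by push_cast; ring
  rw [e0] at h2
  rw [h2]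
  rw [List.getElem_append_left (by simp; omega : s.length + k < (s ++ l).length)]
  rw [List.getElem_append_right (by omega : s.length ≤ s.length + k)]
  congr 1; omega

lemma memX_of_windows (hX : IsSubshift X) {x : ℤ → A}
    (h : ∀ n : ℕ, InLang X (Stmt3Aux.window x (-(n:ℤ)) (2*n+1))) : x ∈ X := by
  have hy : ∀ n : ℕ, ∃ y ∈ X, ∀ j : ℤ, -(n:ℤ) ≤ j → j ≤ n → y j = x j := by
    intro n
    obtain ⟨z, hz, hocc⟩ := h n
    refine ⟨shiftPow (n : ℤ) z, shiftPow_mem hX _ hz, fun j h1 h2 => ?_⟩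
    have hk : (j + n).toNat < 2*n+1 := by omega
    have h3 := hocc (j + n).toNat (by simpa using hk)
    simp only [List.get_eq_getElem] at h3
    rw [Stmt3Aux.window_getElem x _ _ _ hk] at h3
    have e : ((j + n).toNat : ℤ) = j + n := by omega
    rw [e] at h3
    simp only [shiftPow]
    rw [show j + (n:ℤ) = 0 + (j + n) by ring, h3]
    congr 1; omega
  choose y hyX hyagree using hy
  have htend : Filter.Tendsto y Filter.atTop (nhds x) := by
    rw [tendsto_pi_nhds]
    intro j
    have hev : (fun n => y n j) =ᶠ[Filter.atTop] fun _ => x j := by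
      filter_upwards [Filter.eventually_ge_atTop j.natAbs] with n hn
      exact hyagree n j (by omega) (by omega)
    exact Filter.Tendsto.congr' hev.symm tendsto_const_nhds
  exact hX.1.mem_of_tendsto htend (Filter.Eventually.of_forall hyX)

end P2

namespace Stmt3Aux

variable {A : Type*} {u : List A} {S : Set (List A)}

/-- Structure hypothesis: every element of `S` has the form `u ++ w ++ u`. -/
def HForm (u : List A) (S : Set (List A)) : Prop := ∀ v ∈ S, ∃ w : List A, v = u ++ w ++ u

/-- Overlap hypothesis. -/
def HOv (u : List A) (S : Set (List A)) : Prop :=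
  ∀ v₁ ∈ S, ∀ v₂ ∈ S, ∀ v : List A, IsOverlap v₁ v₂ v → IsTrivialOverlap v₁ v₂ v ∨ v = u

lemma S_len (hform : HForm u S) {v : List A} (hv : v ∈ S) :
    u.length + u.length ≤ v.length := by
  obtain ⟨w, rfl⟩ := hform v hv; simp only [List.length_append]; omega

lemma S_ne_u (hform : HForm u S) {v : List A} (hv : v ∈ S) (h0 : 0 < v.length) : v ≠ u := by
  obtain ⟨w, rfl⟩ := hform v hv
  intro h
  have hl := congrArg List.length h
  simp only [List.length_append] at hl h0
  omega

lemma S_getElem_left (hform : HForm u S) {v : List A} (hv : v ∈ S) {k : ℕ}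
    (hk : k < u.length) (hk2 : k < v.length) : v[k]'hk2 = u[k]'hk := by
  obtain ⟨w, rfl⟩ := hform v hv
  rw [List.getElem_append_left (by simp only [List.length_append]; omega : k < (u ++ w).length),
      List.getElem_append_left hk]

lemma S_getElem_right (hform : HForm u S) {v : List A} (hv : v ∈ S) {k : ℕ}
    (h1 : v.length ≤ k + u.length) (hk : k < v.length) :
    v[k]'hk = u[k - (v.length - u.length)]'(by have := S_len hform hv; omega) := by
  obtain ⟨w, rfl⟩ := hform v hv
  rw [List.getElem_append_right
    (by simp only [List.length_append] at h1 hk ⊢; omega : (u ++ w).length ≤ k)]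
  congr 1
  simp only [List.length_append]
  omega

lemma overlap_lemma (hform : HForm u S) (hov : HOv u S) {x : ℤ → A} {v₁ v₂ : List A}
    (h₁ : v₁ ∈ S) (h₂ : v₂ ∈ S) {i₀ i₁ : ℤ}
    (o₁ : occursAt x v₁ i₀) (o₂ : occursAt x v₂ i₁)
    (hle : i₀ ≤ i₁) (hlt : i₁ < i₀ + v₁.length) (hv₂ : 0 < v₂.length) :
    (i₀ = i₁ ∧ v₁ = v₂) ∨ i₁ + u.length = i₀ + v₁.length := by
  set d := (i₁ - i₀).toNat with hdd
  have hd : (i₁:ℤ) = i₀ + d := by omega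
  have hdlt : d < v₁.length := by omega
  have hmatch : ∀ (k : ℕ) (hk : k < v₂.length) (hk' : d + k < v₁.length),
      v₂[k]'hk = v₁[d + k]'hk' := by
    intro k hk hk'
    have e2 := o₂ k hk
    have e1 := o₁ (d + k) hk'
    simp only [List.get_eq_getElem] at e1 e2
    rw [← e2, ← e1]
    congr 1
    push_cast
    omega
  by_cases hc : i₁ + v₂.length ≤ i₀ + v₁.length
  · have hdc : d + v₂.length ≤ v₁.length := by omega
    have hv2eq : v₂ = (v₁.drop d).take v₂.length := by
      apply List.ext_getElem
      · simp; omega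
      · intro i hI h2
        rw [List.getElem_take, List.getElem_drop]
        exact hmatch i hI (by omega)
    have hinf : v₂ <:+: v₁ := by
      rw [hv2eq]
      exact (List.take_prefix _ _).isInfix.trans (List.drop_suffix d v₁).isInfix
    rcases hov v₁ h₁ v₂ h₂ v₂ (Or.inr (Or.inr ⟨rfl, hinf⟩)) with (he | ⟨he1, _⟩) | he
    · rw [he] at hv₂; simp at hv₂
    · left
      have hl : v₂.length = v₁.length := by rw [he1]
      exact ⟨by omega, he1.symm⟩
    · exact absurd he (S_ne_u hform h₂ hv₂)
  · push_neg at hc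
    have hlpos : 0 < v₁.length - d := by omega
    have hllt : v₁.length - d < v₂.length := by omega
    have hdroplen : (v₁.drop d).length = v₁.length - d := by simp
    have hpre : v₁.drop d = v₂.take (v₁.length - d) := by
      apply List.ext_getElem
      · simp; omega
      · intro i h1 h2
        rw [List.getElem_take, List.getElem_drop]
        exact (hmatch i (by omega) (by simp at h1; omega)).symm
    have hovl : IsOverlap v₁ v₂ (v₁.drop d) :=
      Or.inl ⟨List.drop_suffix d v₁, hpre ▸ List.take_prefix (v₁.length - d) v₂⟩
    rcases hov v₁ h₁ v₂ h₂ _ hovl with (he | ⟨he1, he2⟩) | he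
    · have := congrArg List.length he
      simp at this
      omega
    · have l1 := congrArg List.length he1
      have l2 := congrArg List.length he2
      simp at l1 l2
      omega
    · right
      have := congrArg List.length he
      simp at this
      omega

end Stmt3Aux

namespace Stmt3Aux

variable {A : Type*} {u : List A} {S : Set (List A)} {ρ : List A → List A}

/-- Length-preservation hypothesis. -/
def HLen (ρ : List A → List A) (S : Set (List A)) : Prop := ∀ v ∈ S, (ρ v).length = v.length

def occSet (S : Set (List A)) (x : ℤ → A) : Set (List A × ℤ) :=
  {q | q.1 ∈ S ∧ occursAt x q.1 q.2}

open scoped Classical in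
noncomputable def repl (ρ : List A → List A) (T : Set (List A × ℤ)) (x : ℤ → A) : ℤ → A :=
  fun j => if h : ∃ q ∈ T, ∃ k : ℕ, k < q.1.length ∧ j = q.2 + (k : ℤ)
    then (ρ h.choose.1).getD (j - h.choose.2).toNat (x j) else x j

lemma agree (hform : HForm u S) (hov : HOv u S) (hρS : Set.MapsTo ρ S S) (hρlen : HLen ρ S)
    {x : ℤ → A} {v₁ v₂ : List A} {i₀ i₁ : ℤ}
    (h₁ : v₁ ∈ S) (h₂ : v₂ ∈ S) (o₁ : occursAt x v₁ i₀) (o₂ : occursAt x v₂ i₁)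
    {k₁ k₂ : ℕ} (hk₁ : k₁ < v₁.length) (hk₂ : k₂ < v₂.length)
    (hj : i₀ + (k₁ : ℤ) = i₁ + (k₂ : ℤ)) (d₁ d₂ : A) :
    (ρ v₁).getD k₁ d₁ = (ρ v₂).getD k₂ d₂ := by
  have core : ∀ (v₁ v₂ : List A) (i₀ i₁ : ℤ), v₁ ∈ S → v₂ ∈ S →
      occursAt x v₁ i₀ → occursAt x v₂ i₁ → ∀ (k₁ k₂ : ℕ), k₁ < v₁.length → k₂ < v₂.length →
      i₀ + (k₁ : ℤ) = i₁ + (k₂ : ℤ) → i₀ ≤ i₁ →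
      ∀ d₁ d₂ : A, (ρ v₁).getD k₁ d₁ = (ρ v₂).getD k₂ d₂ := by
    clear hj hk₁ hk₂ h₁ h₂ o₁ o₂ d₁ d₂
    intro v₁ v₂ i₀ i₁ h₁ h₂ o₁ o₂ k₁ k₂ hk₁ hk₂ hj hle d₁ d₂
    have hlen₁ : (ρ v₁).length = v₁.length := hρlen v₁ h₁
    have hlen₂ : (ρ v₂).length = v₂.length := hρlen v₂ h₂
    rcases overlap_lemma hform hov h₁ h₂ o₁ o₂ hle (by omega) (by omega) with ⟨hi, hv⟩ | hr
    · subst hv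
      have : k₁ = k₂ := by omega
      subst this
      rw [List.getD_eq_getElem _ _ (by omega), List.getD_eq_getElem _ _ (by omega)]
    · have hu2 := S_len hform h₁
      have m₁ : ρ v₁ ∈ S := hρS h₁
      have m₂ : ρ v₂ ∈ S := hρS h₂
      rw [List.getD_eq_getElem _ _ (by omega), List.getD_eq_getElem _ _ (by omega)]
      rw [S_getElem_right hform m₁ (by omega) (by omega)]
      rw [S_getElem_left hform m₂ (by omega) (by omega)]
      congr 1
      omega
  rcases le_total i₀ i₁ with hle | hle
  · exact core v₁ v₂ i₀ i₁ h₁ h₂ o₁ o₂ k₁ k₂ hk₁ hk₂ hj hle d₁ d₂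
  · exact (core v₂ v₁ i₁ i₀ h₂ h₁ o₂ o₁ k₂ k₁ hk₂ hk₁ (by omega) hle d₂ d₁).symm

lemma repl_val (hform : HForm u S) (hov : HOv u S) (hρS : Set.MapsTo ρ S S) (hρlen : HLen ρ S)
    {x : ℤ → A} {T : Set (List A × ℤ)} (hT : T ⊆ occSet S x)
    {q : List A × ℤ} (hq : q ∈ T) {k : ℕ} (hk : k < q.1.length) {j : ℤ}
    (hj : j = q.2 + (k : ℤ)) :
    repl ρ T x j = (ρ q.1).getD k (x j) := by
  have hcond : ∃ q' ∈ T, ∃ k' : ℕ, k' < q'.1.length ∧ j = q'.2 + (k' : ℤ) := ⟨q, hq, k, hk, hj⟩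
  unfold repl
  rw [dif_pos hcond]
  
  obtain ⟨hmem, k', hk', hj'⟩ := hcond.choose_spec
  have h1 := hT hmem
  have h2 := hT hq
  have e : (j - hcond.choose.2).toNat = k' := by omega
  rw [e]
  exact agree hform hov hρS hρlen h1.1 h2.1 h1.2 h2.2 hk' hk (by omega) (x j) (x j)

lemma repl_off {T : Set (List A × ℤ)} {x : ℤ → A} {j : ℤ}
    (h : ¬ ∃ q ∈ T, ∃ k : ℕ, k < q.1.length ∧ j = q.2 + (k : ℤ)) : repl ρ T x j = x j :=
  dif_neg h

/-- The full replacement map. -/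
noncomputable def Fmap (ρ : List A → List A) (S : Set (List A)) (x : ℤ → A) : ℤ → A :=
  repl ρ (occSet S x) x

lemma F_occ (hform : HForm u S) (hov : HOv u S) (hρS : Set.MapsTo ρ S S) (hρlen : HLen ρ S)
    {x : ℤ → A} {q : List A × ℤ} (hq : q ∈ occSet S x) :
    occursAt (Fmap ρ S x) (ρ q.1) q.2 := by
  intro k hk
  rw [List.get_eq_getElem]
  have hk' : k < q.1.length := by rw [← hρlen q.1 hq.1]; simpa using hk
  rw [Fmap, repl_val hform hov hρS hρlen (le_refl _) hq hk' rfl]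
  rw [List.getD_eq_getElem _ _ (by simpa using hk)]

lemma F_uncov {x : ℤ → A} {j : ℤ}
    (h : ∀ q ∈ occSet S x, ∀ k : ℕ, k < q.1.length → j ≠ q.2 + (k : ℤ)) :
    Fmap ρ S x j = x j := by
  apply repl_off
  rintro ⟨q, hq, k, hk, hj⟩
  exact h q hq k hk hj

end Stmt3Aux

namespace Stmt3Aux

variable {A : Type*} {u : List A} {S : Set (List A)} {ρ : List A → List A}

lemma F_shift (hform : HForm u S) (hov : HOv u S) (hρS : Set.MapsTo ρ S S) (hρlen : HLen ρ S)
    (x : ℤ → A) : Fmap ρ S (shiftMap x) = shiftMap (Fmap ρ S x) := by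
  funext i
  show Fmap ρ S (shiftMap x) i = Fmap ρ S x (i + 1)
  by_cases hc : ∃ q ∈ occSet S (shiftMap x), ∃ k : ℕ, k < q.1.length ∧ i = q.2 + (k : ℤ)
  · obtain ⟨q, hq, k, hk, hj⟩ := hc
    have hq' : (q.1, q.2 + 1) ∈ occSet S x := ⟨hq.1, (occursAt_shift x q.1 q.2).mp hq.2⟩
    rw [Fmap, repl_val hform hov hρS hρlen (le_refl _) hq hk hj]
    rw [Fmap, repl_val hform hov hρS hρlen (le_refl _) hq' (k := k) hk (by simp; omega)]
    rfl
  · rw [Fmap, repl_off hc, Fmap, repl_off]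
    · rfl
    · rintro ⟨q, hq, k, hk, hj⟩
      exact hc ⟨(q.1, q.2 - 1), ⟨hq.1, by
        rw [occursAt_shift]
        simpa using hq.2⟩, k, hk, by simp; omega⟩

lemma F_local (hform : HForm u S) (hov : HOv u S) (hρS : Set.MapsTo ρ S S) (hρlen : HLen ρ S)
    {L : ℕ} (hL : ∀ v ∈ S, v.length ≤ L) {x y : ℤ → A} {i : ℤ}
    (hxy : ∀ j : ℤ, i - L ≤ j → j ≤ i + L → x j = y j) :
    Fmap ρ S x i = Fmap ρ S y i := by
  have htrans : ∀ {x' y' : ℤ → A}, (∀ j : ℤ, i - L ≤ j → j ≤ i + L → x' j = y' j) →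
      ∀ q ∈ occSet S x', ∀ k : ℕ, k < q.1.length → i = q.2 + (k : ℤ) →
      occursAt y' q.1 q.2 := by
    intro x' y' hxy' q hq k hk hik
    intro k' hk'
    rw [← hxy' (q.2 + k') (by have := hL q.1 hq.1; omega) (by have := hL q.1 hq.1; omega)]
    exact hq.2 k' hk'
  by_cases hc : ∃ q ∈ occSet S x, ∃ k : ℕ, k < q.1.length ∧ i = q.2 + (k : ℤ)
  · obtain ⟨q, hq, k, hk, hj⟩ := hc
    have hqy : (q.1, q.2) ∈ occSet S y := ⟨hq.1, htrans hxy q hq k hk hj⟩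
    rw [Fmap, repl_val hform hov hρS hρlen (le_refl _) hq hk hj]
    rw [Fmap, repl_val hform hov hρS hρlen (le_refl _) hqy (k := k) hk hj]
    rw [List.getD_eq_getElem _ _ (by rw [hρlen q.1 hq.1]; omega),
        List.getD_eq_getElem _ _ (by rw [hρlen q.1 hq.1]; omega)]
  · rw [Fmap, repl_off hc, Fmap, repl_off]
    · exact hxy i (by omega) (by omega)
    · rintro ⟨q, hq, k, hk, hj⟩
      exact hc ⟨(q.1, q.2), ⟨hq.1, htrans (fun j h1 h2 => (hxy j h1 h2).symm) q hq k hk hj⟩,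
        k, hk, hj⟩

lemma F_occ_inv (hform : HForm u S) (hov : HOv u S) (hρS : Set.MapsTo ρ S S) (hρlen : HLen ρ S)
    (hρsur : Set.SurjOn ρ S S) {x : ℤ → A} {q : List A × ℤ}
    (hq : q ∈ occSet S (Fmap ρ S x)) :
    ∃ V ∈ S, occursAt x V q.2 ∧ ρ V = q.1 := by
  obtain ⟨hq1, hq2⟩ := hq
  by_cases h0 : q.1.length = 0
  · obtain ⟨V, hV, hρV⟩ := hρsur hq1
    refine ⟨V, hV, fun k hk => absurd hk (by rw [← hρlen V hV, hρV]; omega), hρV⟩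
  · by_cases hA : ∃ V ∈ S, occursAt x V q.2 ∧ ρ V = q.1
    · exact hA
    · push_neg at hA
      exfalso
      have hocc : occursAt x q.1 q.2 := by
        intro k hk
        rw [List.get_eq_getElem]
        have hq2e := occursAt_getElem hq2 k hk
        by_cases hcov : ∃ qx ∈ occSet S x, ∃ kx : ℕ, kx < qx.1.length ∧
            q.2 + (k : ℤ) = qx.2 + (kx : ℤ)
        · obtain ⟨qx, hqx, kx, hkx, hjx⟩ := hcov
          have hFocc : occursAt (Fmap ρ S x) (ρ qx.1) qx.2 := F_occ hform hov hρS hρlen hqx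
          have hρmem : ρ qx.1 ∈ S := hρS hqx.1
          have hρl : (ρ qx.1).length = qx.1.length := hρlen qx.1 hqx.1
          have hxval := occursAt_getElem hqx.2 kx hkx
          have hFval := occursAt_getElem hFocc kx (by omega)
          have hul := S_len hform hqx.1
          have hul2 := S_len hform hq1
          rw [hjx] at hq2e
          show x (q.2 + (k : ℤ)) = q.1[k]'hk
          rw [hjx, ← hq2e, hxval, hFval]
          rcases le_total qx.2 q.2 with hle | hle
          · rcases overlap_lemma hform hov hρmem hq1 hFocc hq2 hle (by omega) (by omega)
              with ⟨hi, hv⟩ | hr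
            · exact absurd hv (hA qx.1 hqx.1 (hi ▸ hqx.2))
            · rw [S_getElem_right hform hqx.1 (by omega) hkx,
                  S_getElem_right hform hρmem (by omega) (by omega)]
              congr 1
              omega
          · rcases overlap_lemma hform hov hq1 hρmem hq2 hFocc hle (by omega) (by omega)
              with ⟨hi, hv⟩ | hr
            · refine absurd hv.symm (hA qx.1 hqx.1 ?_)
              rw [hi]
              exact hqx.2
            · rw [S_getElem_left hform hqx.1 (by omega) hkx,
                  S_getElem_left hform hρmem (by omega) (by omega)]
        · have h1 : Fmap ρ S x (q.2 + (k : ℤ)) = x (q.2 + (k : ℤ)) := repl_off (by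
            rintro ⟨qx, hqx, kx, hkx, hjx⟩
            exact hcov ⟨qx, hqx, kx, hkx, hjx⟩)
          show x (q.2 + (k : ℤ)) = q.1[k]'hk
          rw [← h1, hq2e]
      -- now q.1 occurs in x at q.2; derive ρ q.1 = q.1
      have hFocc2 : occursAt (Fmap ρ S x) (ρ q.1) q.2 := F_occ hform hov hρS hρlen ⟨hq1, hocc⟩
      have hρmem : ρ q.1 ∈ S := hρS hq1
      have hρl : (ρ q.1).length = q.1.length := hρlen q.1 hq1
      have hul := S_len hform hq1
      rcases overlap_lemma hform hov hρmem hq1 hFocc2 hq2 (le_refl q.2) (by omega) (by omega)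
        with ⟨_, hv⟩ | hr
      · exact hA q.1 hq1 hocc hv
      · omega

lemma F_cancel {ρ' : List A → List A}
    (hform : HForm u S) (hov : HOv u S) (hρS : Set.MapsTo ρ S S) (hρlen : HLen ρ S)
    (hρsur : Set.SurjOn ρ S S) (hρ'S : Set.MapsTo ρ' S S) (hρ'len : HLen ρ' S)
    (hinv : ∀ v ∈ S, ρ' (ρ v) = v) (x : ℤ → A) :
    Fmap ρ' S (Fmap ρ S x) = x := by
  funext j
  by_cases hc : ∃ q ∈ occSet S (Fmap ρ S x), ∃ k : ℕ, k < q.1.length ∧ j = q.2 + (k : ℤ)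
  · obtain ⟨q, hq, k, hk, hj⟩ := hc
    obtain ⟨V, hVS, hVocc, hρV⟩ := F_occ_inv hform hov hρS hρlen hρsur hq
    rw [Fmap, repl_val hform hov hρ'S hρ'len (le_refl _) hq hk hj]
    have e1 : ρ' q.1 = V := by rw [← hρV, hinv V hVS]
    have hkV : k < V.length := by rw [← hρlen V hVS, hρV]; exact hk
    rw [e1, List.getD_eq_getElem _ _ hkV]
    have := hVocc k hkV
    rw [List.get_eq_getElem] at this
    rw [hj, this]
  · rw [Fmap, repl_off hc]
    apply repl_off
    rintro ⟨qx, hqx, kx, hkx, hjx⟩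
    refine hc ⟨(ρ qx.1, qx.2), ⟨hρS hqx.1, F_occ hform hov hρS hρlen hqx⟩, kx,
      (by rw [hρlen qx.1 hqx.1]; exact hkx), hjx⟩

end Stmt3Aux

namespace Stmt3Aux

variable {A : Type*} {u : List A} {S : Set (List A)} {ρ : List A → List A}

lemma window_of_occursAt {y : ℤ → A} {v : List A} {i : ℤ} (hocc : occursAt y v i) :
    window y i v.length = v := by
  apply List.ext_getElem (by simp)
  intro k h1 h2
  rw [window_getElem y i v.length k (by simpa using h1)]
  exact occursAt_getElem hocc k h2

lemma context_step [TopologicalSpace A] {X : Set (ℤ → A)} (hX : IsSubshift X)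
    (hρlen : HLen ρ S) (hρsyn : ∀ v ∈ S, contexts X (ρ v) = contexts X v)
    {x' x'' : ℤ → A} (hx' : x' ∈ X) {v : List A} (hv : v ∈ S) {i₀ : ℤ}
    (hocc : occursAt x' v i₀)
    (hin : ∀ (k : ℕ) (hk : k < (ρ v).length), x'' (i₀ + k) = (ρ v)[k]'hk)
    (hout : ∀ j : ℤ, j < i₀ ∨ i₀ + (v.length : ℤ) ≤ j → x'' j = x' j) : x'' ∈ X := by
  apply memX_of_windows hX
  intro n
  set lo := min (-(n : ℤ)) i₀ with hlodef
  set hi := max ((n : ℤ) + 1) (i₀ + (v.length : ℤ)) with hhidef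
  have hlo1 : lo ≤ -(n : ℤ) := min_le_left _ _
  have hlo2 : lo ≤ i₀ := min_le_right _ _
  have hhi1 : (n : ℤ) + 1 ≤ hi := le_max_left _ _
  have hhi2 : i₀ + (v.length : ℤ) ≤ hi := le_max_right _ _
  set n₁ := (i₀ - lo).toNat with hn₁def
  set n₂ := (hi - (i₀ + (v.length : ℤ))).toNat with hn₂def
  have e : lo + (n₁ : ℤ) = i₀ := by omega
  have hbig' : window x' lo (n₁ + (v.length + n₂)) =
      window x' lo n₁ ++ (v ++ window x' (i₀ + (v.length : ℤ)) n₂) := by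
    rw [window_append, window_append, e, window_of_occursAt hocc]
  have w1 : window x'' lo n₁ = window x' lo n₁ :=
    window_congr fun k hk => hout _ (Or.inl (by omega))
  have w2 : window x'' i₀ v.length = ρ v := by
    apply List.ext_getElem (by simp [hρlen v hv])
    intro k h1 h2
    rw [window_getElem x'' i₀ v.length k (by simpa using h1)]
    exact hin k h2
  have w3 : window x'' (i₀ + (v.length : ℤ)) n₂ = window x' (i₀ + (v.length : ℤ)) n₂ :=
    window_congr fun k hk => hout _ (Or.inr (by omega))
  have hbig'' : window x'' lo (n₁ + (v.length + n₂)) =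
      window x' lo n₁ ++ (ρ v ++ window x' (i₀ + (v.length : ℤ)) n₂) := by
    rw [window_append, window_append, e, w1, w2, w3]
  have hctx : (window x' lo n₁, window x' (i₀ + (v.length : ℤ)) n₂) ∈ contexts X v := by
    show InLang X (window x' lo n₁ ++ v ++ window x' (i₀ + (v.length : ℤ)) n₂)
    rw [List.append_assoc, ← hbig']
    exact inLang_window hX hx' lo _
  rw [← hρsyn v hv] at hctx
  have hbigIn : InLang X (window x'' lo (n₁ + (v.length + n₂))) := by
    rw [hbig'']
    have : InLang X (window x' lo n₁ ++ ρ v ++ window x' (i₀ + (v.length : ℤ)) n₂) := hctx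
    rwa [List.append_assoc] at this
  have harith : n₁ + (v.length + n₂) =
      (-(n : ℤ) - lo).toNat + ((2 * n + 1) + (hi - ((n : ℤ) + 1)).toNat) := by omega
  rw [harith] at hbigIn
  exact inLang_infix hX hbigIn (window_infix x'' lo (-(n : ℤ)) _ _ _ (by omega))

lemma repl_mem [TopologicalSpace A] {X : Set (ℤ → A)} (hX : IsSubshift X)
    (hform : HForm u S) (hov : HOv u S) (hρS : Set.MapsTo ρ S S) (hρlen : HLen ρ S)
    (hρsyn : ∀ v ∈ S, contexts X (ρ v) = contexts X v)
    {x : ℤ → A} (hx : x ∈ X) {T : Set (List A × ℤ)} (hTfin : T.Finite)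
    (hT : T ⊆ occSet S x) : repl ρ T x ∈ X := by
  revert hT
  refine Set.Finite.induction_on (motive := fun T _ => T ⊆ occSet S x → repl ρ T x ∈ X) T hTfin ?_ ?_
  · intro _
    have he : repl ρ (∅ : Set (List A × ℤ)) x = x :=
      funext fun j => repl_off (by rintro ⟨q, hq, -⟩; exact hq)
    rwa [he]
  · rintro q T' hqT' hT'fin ih hsub
    have hqocc : q ∈ occSet S x := hsub (Set.mem_insert q T')
    have hT'sub : T' ⊆ occSet S x := fun a ha => hsub (Set.mem_insert_of_mem q ha)
    have hy' : repl ρ T' x ∈ X := ih hT'sub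
    have hB : ∀ (k : ℕ), k < q.1.length → repl ρ T' x (q.2 + (k : ℤ)) = x (q.2 + (k : ℤ)) := by
      intro k hk
      by_cases hcov : ∃ q' ∈ T', ∃ k' : ℕ, k' < q'.1.length ∧ q.2 + (k : ℤ) = q'.2 + (k' : ℤ)
      · obtain ⟨q', hq', k', hk', hj'⟩ := hcov
        have hq'occ := hT'sub hq'
        have hne : q' ≠ q := fun h => hqT' (h ▸ hq')
        rw [repl_val hform hov hρS hρlen hT'sub hq' hk' hj']
        have hρm : ρ q'.1 ∈ S := hρS hq'occ.1
        have hρl : (ρ q'.1).length = q'.1.length := hρlen _ hq'occ.1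
        have hul := S_len hform hq'occ.1
        have hul2 := S_len hform hqocc.1
        have hxv := occursAt_getElem hq'occ.2 k' hk'
        rw [List.getD_eq_getElem _ _ (by omega), hj', hxv]
        rcases le_total q.2 q'.2 with hle | hle
        · rcases overlap_lemma hform hov hqocc.1 hq'occ.1 hqocc.2 hq'occ.2 hle
            (by omega) (by omega) with ⟨hi, hv⟩ | hr
          · exact absurd (by rw [Prod.ext_iff]; exact ⟨hv.symm, hi.symm⟩ : q' = q) hne
          · rw [S_getElem_left hform hρm (by omega) (by omega),
                S_getElem_left hform hq'occ.1 (by omega) hk']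
        · rcases overlap_lemma hform hov hq'occ.1 hqocc.1 hq'occ.2 hqocc.2 hle
            (by omega) (by omega) with ⟨hi, hv⟩ | hr
          · exact absurd (by rw [Prod.ext_iff]; exact ⟨hv, hi⟩ : q' = q) hne
          · rw [S_getElem_right hform hρm (by omega) (by omega),
                S_getElem_right hform hq'occ.1 (by omega) hk']
            congr 1
            omega
      · exact repl_off hcov
    have hoccy' : occursAt (repl ρ T' x) q.1 q.2 := by
      intro k hk
      rw [hB k hk]
      exact hqocc.2 k hk
    apply context_step hX hρlen hρsyn hy' hqocc.1 hoccy'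
    · intro k hk
      have hk' : k < q.1.length := by rw [← hρlen _ hqocc.1]; exact hk
      rw [repl_val hform hov hρS hρlen hsub (Set.mem_insert q T') hk' rfl]
      exact List.getD_eq_getElem _ _ hk
    · intro j hj
      by_cases hcov : ∃ q' ∈ T', ∃ k' : ℕ, k' < q'.1.length ∧ j = q'.2 + (k' : ℤ)
      · obtain ⟨q', hq', k', hk', hj'⟩ := hcov
        rw [repl_val hform hov hρS hρlen hsub (Set.mem_insert_of_mem q hq') hk' hj',
            repl_val hform hov hρS hρlen hT'sub hq' hk' hj']
      · rw [repl_off hcov]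
        apply repl_off
        rintro ⟨q'', hq'', k'', hk'', hj''⟩
        rcases Set.mem_insert_iff.mp hq'' with rfl | hmem
        · omega
        · exact hcov ⟨q'', hmem, k'', hk'', hj''⟩

lemma F_continuous [TopologicalSpace A] [DiscreteTopology A]
    (hform : HForm u S) (hov : HOv u S) (hρS : Set.MapsTo ρ S S) (hρlen : HLen ρ S)
    {L : ℕ} (hL : ∀ v ∈ S, v.length ≤ L) : Continuous (Fmap ρ S) := by
  apply continuous_pi
  intro i
  rw [continuous_iff_continuousAt]
  intro x
  have hopen : {y : ℤ → A | ∀ j ∈ Finset.Icc (i - (L : ℤ)) (i + L), y j = x j} ∈ nhds x := by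
    have heq : {y : ℤ → A | ∀ j ∈ Finset.Icc (i - (L : ℤ)) (i + L), y j = x j} =
        ⋂ j ∈ (Finset.Icc (i - (L : ℤ)) (i + L) : Finset ℤ),
          (fun y : ℤ → A => y j) ⁻¹' {x j} := by
      ext y; simp [Set.mem_iInter]
    have hop : IsOpen {y : ℤ → A | ∀ j ∈ Finset.Icc (i - (L : ℤ)) (i + L), y j = x j} := by
      rw [heq]
      exact isOpen_biInter_finset fun j _ =>
        (continuous_apply j).isOpen_preimage _ (isOpen_discrete _)
    exact hop.mem_nhds (fun j hj => rfl)
  have hev : ∀ᶠ y in nhds x, Fmap ρ S y i = Fmap ρ S x i := by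
    filter_upwards [hopen] with y hy
    exact F_local hform hov hρS hρlen hL
      (fun j h1 h2 => hy j (Finset.mem_Icc.mpr ⟨by omega, by omega⟩))
  exact Filter.Tendsto.congr' (Filter.EventuallyEq.symm hev) tendsto_const_nhds

end Stmt3Aux

namespace Stmt3Aux

variable {A : Type*} {u : List A} {S : Set (List A)} {ρ : List A → List A}

lemma Fmap_mem [TopologicalSpace A] {X : Set (ℤ → A)} (hX : IsSubshift X)
    (hform : HForm u S) (hov : HOv u S) (hρS : Set.MapsTo ρ S S) (hρlen : HLen ρ S)
    (hρsyn : ∀ v ∈ S, contexts X (ρ v) = contexts X v) (hSfin : S.Finite)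
    {L : ℕ} (hL : ∀ v ∈ S, v.length ≤ L)
    {x : ℤ → A} (hx : x ∈ X) : Fmap ρ S x ∈ X := by
  apply memX_of_windows hX
  intro n
  set T : Set (List A × ℤ) :=
    {q | q ∈ occSet S x ∧ q.2 ≤ (n : ℤ) ∧ -(n : ℤ) < q.2 + q.1.length} with hTdef
  have hTsub : T ⊆ occSet S x := fun q hq => hq.1
  have hTfin : T.Finite := by
    apply Set.Finite.subset (hSfin.prod (Set.finite_Icc (-(n : ℤ) - L) (n : ℤ)))
    rintro q ⟨hq1, hq2, hq3⟩
    exact ⟨hq1.1, Set.mem_Icc.mpr ⟨by have := hL q.1 hq1.1; omega, hq2⟩⟩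
  have hyX : repl ρ T x ∈ X := repl_mem hX hform hov hρS hρlen hρsyn hx hTfin hTsub
  have hw : window (Fmap ρ S x) (-(n : ℤ)) (2 * n + 1) =
      window (repl ρ T x) (-(n : ℤ)) (2 * n + 1) := by
    apply window_congr
    intro k hk
    by_cases hcov : ∃ q ∈ occSet S x, ∃ kq : ℕ, kq < q.1.length ∧
        -(n : ℤ) + (k : ℤ) = q.2 + (kq : ℤ)
    · obtain ⟨q, hq, kq, hkq, hjq⟩ := hcov
      have hqT : q ∈ T := ⟨hq, by omega, by omega⟩
      rw [Fmap, repl_val hform hov hρS hρlen (le_refl _) hq hkq hjq,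
          repl_val hform hov hρS hρlen hTsub hqT hkq hjq]
    · rw [Fmap, repl_off hcov, repl_off (fun hc => hcov (by
        obtain ⟨q, hq, kq, hkq, hjq⟩ := hc
        exact ⟨q, hTsub hq, kq, hkq, hjq⟩))]
  rw [hw]
  exact inLang_window hX hyX _ _

end Stmt3Aux

/-- **marker lemma.** Given marker words `uWu ⊆ L(X)` overlapping only
trivially or in `u`, and a length- and syntactic-class-preserving permutation `π` of `uWu`,
there is a reversible CA replacing every occurrence of `w ∈ uWu` by `π(w)`; moreover the
elements of `uWu` occur in `F(x)` at exactly the same positions as in `x`. -/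
theorem stmt3 {A : Type*} [TopologicalSpace A] [DiscreteTopology A]
    (X : Set (ℤ → A)) (hX : IsSubshift X)
    (u : List A) (W : Finset (List A))
    (hWL : ∀ w ∈ W, InLang X (u ++ w ++ u))
    (hover : ∀ w₁ ∈ W, ∀ w₂ ∈ W, ∀ v : List A,
      IsOverlap (u ++ w₁ ++ u) (u ++ w₂ ++ u) v →
      IsTrivialOverlap (u ++ w₁ ++ u) (u ++ w₂ ++ u) v ∨ v = u)
    (π : List A → List A)
    (hπ : Set.BijOn π {v | ∃ w ∈ W, v = u ++ w ++ u} {v | ∃ w ∈ W, v = u ++ w ++ u})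
    (hπlen : ∀ w ∈ W, (π (u ++ w ++ u)).length = (u ++ w ++ u).length)
    (hπsyn : ∀ w ∈ W, contexts X (π (u ++ w ++ u)) = contexts X (u ++ w ++ u)) :
    ∃ F : (ℤ → A) → (ℤ → A), IsAutomorphism X F ∧
      (∀ x ∈ X, ∀ w ∈ W, ∀ i : ℤ,
        occursAt x (u ++ w ++ u) i → occursAt (F x) (π (u ++ w ++ u)) i) ∧
      (∀ x ∈ X, ∀ j : ℤ,
        (∀ w ∈ W, ∀ i : ℤ, occursAt x (u ++ w ++ u) i →
          j < i ∨ i + ((u ++ w ++ u).length : ℤ) ≤ j) → F x j = x j) ∧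
      (∀ x ∈ X, ∀ i : ℤ,
        (∃ w ∈ W, occursAt x (u ++ w ++ u) i) ↔ (∃ w ∈ W, occursAt (F x) (u ++ w ++ u) i)) := by
  classical
  set S : Set (List A) := {v | ∃ w ∈ W, v = u ++ w ++ u} with hSdef
  have hform : Stmt3Aux.HForm u S := by rintro v ⟨w, _, rfl⟩; exact ⟨w, rfl⟩
  have hov : Stmt3Aux.HOv u S := by
    rintro v₁ ⟨w₁, hw₁, rfl⟩ v₂ ⟨w₂, hw₂, rfl⟩ v hvov
    exact hover w₁ hw₁ w₂ hw₂ v hvov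
  have hπS : Set.MapsTo π S S := hπ.mapsTo
  have hπlen' : Stmt3Aux.HLen π S := by rintro v ⟨w, hw, rfl⟩; exact hπlen w hw
  have hπsyn' : ∀ v ∈ S, contexts X (π v) = contexts X v := by
    rintro v ⟨w, hw, rfl⟩; exact hπsyn w hw
  have hπsur : Set.SurjOn π S S := hπ.surjOn
  set σ : List A → List A := Function.invFunOn π S with hσdef
  have hinv1 : ∀ v ∈ S, σ (π v) = v := fun v hv => hπ.invOn_invFunOn.1 hv
  have hinv2 : ∀ v ∈ S, π (σ v) = v := fun v hv => hπ.invOn_invFunOn.2 hv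
  have hσS : Set.MapsTo σ S S := by
    intro v hv
    obtain ⟨a, ha, hfa⟩ := hπ.surjOn hv
    rw [← hfa, hinv1 a ha]
    exact ha
  have hσlen : Stmt3Aux.HLen σ S := by
    intro v hv
    have h1 := hπlen' (σ v) (hσS hv)
    rw [hinv2 v hv] at h1
    omega
  have hσsyn : ∀ v ∈ S, contexts X (σ v) = contexts X v := by
    intro v hv
    have h1 := hπsyn' (σ v) (hσS hv)
    rw [hinv2 v hv] at h1
    exact h1.symm
  have hσsur : Set.SurjOn σ S S := fun v hv => ⟨π v, hπS hv, hinv1 v hv⟩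
  have hSfin : S.Finite := by
    have he : S = (fun w => u ++ w ++ u) '' (↑W : Set (List A)) := by
      ext v
      constructor
      · rintro ⟨w, hw, rfl⟩; exact ⟨w, hw, rfl⟩
      · rintro ⟨w, hw, rfl⟩; exact ⟨w, hw, rfl⟩
    rw [he]
    exact (W.finite_toSet).image _
  set L : ℕ := 2 * u.length + W.sup List.length with hLdef
  have hL : ∀ v ∈ S, v.length ≤ L := by
    rintro v ⟨w, hw, rfl⟩
    have := Finset.le_sup (f := List.length) hw
    simp only [List.length_append]
    omega
  refine ⟨Stmt3Aux.Fmap π S,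
    ⟨fun x hx => Stmt3Aux.Fmap_mem hX hform hov hπS hπlen' hπsyn' hSfin hL hx,
     (Stmt3Aux.F_continuous hform hov hπS hπlen' hL).continuousOn,
     fun x _ => Stmt3Aux.F_shift hform hov hπS hπlen' x,
     Stmt3Aux.Fmap σ S,
     fun x hx => Stmt3Aux.Fmap_mem hX hform hov hσS hσlen hσsyn hSfin hL hx,
     (Stmt3Aux.F_continuous hform hov hσS hσlen hL).continuousOn,
     fun x _ => Stmt3Aux.F_shift hform hov hσS hσlen x,
     fun x _ => Stmt3Aux.F_cancel hform hov hπS hπlen' hπsur hσS hσlen hinv1 x,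
     fun x _ => Stmt3Aux.F_cancel hform hov hσS hσlen hσsur hπS hπlen' hinv2 x⟩,
    ?_, ?_, ?_⟩
  · intro x hx w hw i hocc
    exact Stmt3Aux.F_occ hform hov hπS hπlen' (q := (u ++ w ++ u, i)) ⟨⟨w, hw, rfl⟩, hocc⟩
  · intro x hx j hyp
    apply Stmt3Aux.F_uncov
    intro q hq k hk hj
    obtain ⟨w, hw, hq1eq⟩ := hq.1
    have hocc : occursAt x (u ++ w ++ u) q.2 := hq1eq ▸ hq.2
    rcases hyp w hw q.2 hocc with h1 | h2
    · rw [hq1eq] at hk; omega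
    · rw [hq1eq] at hk; omega
  · intro x hx i
    constructor
    · rintro ⟨w, hw, hocc⟩
      have hF := Stmt3Aux.F_occ hform hov hπS hπlen'
        (q := (u ++ w ++ u, i)) ⟨⟨w, hw, rfl⟩, hocc⟩
      obtain ⟨w', hw', he⟩ := hπS (⟨w, hw, rfl⟩ : (u ++ w ++ u) ∈ S)
      exact ⟨w', hw', by rw [← he]; exact hF⟩
    · rintro ⟨w, hw, hocc⟩
      obtain ⟨V, hVS, hVocc, hρV⟩ := Stmt3Aux.F_occ_inv hform hov hπS hπlen' hπsur
        (q := (u ++ w ++ u, i)) ⟨⟨w, hw, rfl⟩, hocc⟩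
      obtain ⟨w₀, hw₀, rfl⟩ := hVS
      exact ⟨w₀, hw₀, hVocc⟩
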